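/- Let β, ζ : ℝ → ℝ be nondecreasing Lipschitz continuous functions with β(0) = ζ(0) = 0, and suppose there exist M₀, M₁ > 0 with |ζ(s)| ≥ M₀|s| − M₁ for all s ∈ ℝ. Then the graph G = {(ζ(s), β(s)) : s ∈ ℝ} is maximal monotone; that is, for any (x, y) ∈ ℝ² satisfying (ζ(s) − x)(β(s) − y) ≥ 0 for all s ∈ ℝ, there exists w ∈ ℝ with x = ζ(w) and y = β(w). -/

import Mathlib

/-- The graph `{(ζ s, β s) : s ∈ ℝ}` is maximal monotone: if `(x, y)` satisfies
`(ζ s - x) * (β s - y) ≥ 0` for all `s`, then `x = ζ w` and `y = β w` for some `w`. -/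
theorem stmt17 (β ζ : ℝ → ℝ) (Lβ Lζ : ℝ) (hLβ : 0 < Lβ) (hLζ : 0 < Lζ)
    (hβmono : Monotone β) (hζmono : Monotone ζ)
    (hβlip : LipschitzWith Lβ.toNNReal β) (hζlip : LipschitzWith Lζ.toNNReal ζ)
    (hβ0 : β 0 = 0) (hζ0 : ζ 0 = 0)
    (M₀ M₁ : ℝ) (hM₀ : 0 < M₀) (hM₁ : 0 < M₁)
    (hgrow : ∀ s : ℝ, M₀ * |s| - M₁ ≤ |ζ s|)
    (x y : ℝ) (hxy : ∀ s : ℝ, 0 ≤ (ζ s - x) * (β s - y)) :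
    ∃ w : ℝ, x = ζ w ∧ y = β w := by
  have hζc : Continuous ζ := hζlip.continuous
  have hβc : Continuous β := hβlip.continuous
  -- ζ takes large positive and negative values
  set R : ℝ := (M₁ + |x| + 1) / M₀ with hR
  have hRpos : 0 < R := by positivity
  have hζR : x ≤ ζ R := by
    have h1 : 0 ≤ ζ R := by rw [← hζ0]; exact hζmono hRpos.le
    have h2 := hgrow R
    rw [abs_of_nonneg hRpos.le, abs_of_nonneg h1] at h2
    have : M₀ * R = M₁ + |x| + 1 := by rw [hR]; field_simp
    nlinarith [abs_nonneg x, le_abs_self x]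
  have hζmR : ζ (-R) ≤ x := by
    have h1 : ζ (-R) ≤ 0 := by rw [← hζ0]; exact hζmono (by linarith)
    have h2 := hgrow (-R)
    rw [abs_neg, abs_of_nonneg hRpos.le, abs_of_nonpos h1] at h2
    have : M₀ * R = M₁ + |x| + 1 := by rw [hR]; field_simp
    nlinarith [abs_nonneg x, neg_abs_le x]
  -- S = ζ⁻¹ {x} is nonempty and compact
  set S : Set ℝ := ζ ⁻¹' {x} with hS
  have hSne : S.Nonempty := by
    obtain ⟨s, _, hs⟩ := intermediate_value_Icc (by linarith : (-R : ℝ) ≤ R)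
      hζc.continuousOn ⟨hζmR, hζR⟩
    exact ⟨s, hs⟩
  have hSclosed : IsClosed S := isClosed_singleton.preimage hζc
  have hSbdd : Bornology.IsBounded S := by
    apply (Metric.isBounded_Icc (-((M₁ + |x|) / M₀)) ((M₁ + |x|) / M₀)).subset
    intro s hs
    have hsx : |ζ s| = |x| := by rw [hs]
    have := hgrow s
    rw [hsx] at this
    have habs : |s| ≤ (M₁ + |x|) / M₀ := by
      rw [le_div_iff₀ hM₀]; nlinarith
    exact abs_le.mp habs
  have hScpt : IsCompact S := Metric.isCompact_of_isClosed_isBounded hSclosed hSbdd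
  set a : ℝ := sInf S with ha
  set b : ℝ := sSup S with hb
  have haS : a ∈ S := hScpt.sInf_mem hSne
  have hbS : b ∈ S := hScpt.sSup_mem hSne
  have hab : a ≤ b := csInf_le_csSup hSne hScpt.bddBelow hScpt.bddAbove
  have hζa : ζ a = x := haS
  have hζb : ζ b = x := hbS
  -- β b ≥ y
  have hyb : y ≤ β b := by
    have hev : ∀ᶠ t in nhdsWithin b (Set.Ioi b), y ≤ β t := by
      filter_upwards [self_mem_nhdsWithin] with t ht
      have htb : b < t := ht
      have hζt : x < ζ t := by
        have h1 : x ≤ ζ t := hζb ▸ hζmono htb.le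
        rcases h1.lt_or_eq with h | h
        · exact h
        · exact absurd (le_csSup hScpt.bddAbove (show t ∈ S from h.symm)) (not_le.mpr htb)
      nlinarith [hxy t]
    have htd : Filter.Tendsto β (nhdsWithin b (Set.Ioi b)) (nhds (β b)) :=
      (hβc.continuousAt).continuousWithinAt.tendsto
    exact ge_of_tendsto htd hev
  -- β a ≤ y
  have hya : β a ≤ y := by
    have hev : ∀ᶠ t in nhdsWithin a (Set.Iio a), β t ≤ y := by
      filter_upwards [self_mem_nhdsWithin] with t ht
      have hta : t < a := ht
      have hζt : ζ t < x := by
        have h1 : ζ t ≤ x := hζa ▸ hζmono hta.le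
        rcases h1.lt_or_eq with h | h
        · exact h
        · exact absurd (csInf_le hScpt.bddBelow (show t ∈ S from h)) (not_le.mpr hta)
      nlinarith [hxy t]
    have htd : Filter.Tendsto β (nhdsWithin a (Set.Iio a)) (nhds (β a)) :=
      (hβc.continuousAt).continuousWithinAt.tendsto
    exact le_of_tendsto htd hev
  obtain ⟨w, hwI, hwy⟩ := intermediate_value_Icc hab hβc.continuousOn ⟨hya, hyb⟩
  refine ⟨w, ?_, hwy.symm⟩
  have h1 : ζ a ≤ ζ w := hζmono hwI.1
  have h2 : ζ w ≤ ζ b := hζmono hwI.2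
  rw [hζa] at h1; rw [hζb] at h2
  linarith
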